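/- Let X be a real Banach space carrying a duality selection mapping J : X → X* (i.e., ⟨x, Jx⟩ = ‖x‖² = ‖Jx‖² for all x ∈ X) with a modulus of continuity ω (i.e., for all M, ε > 0: ‖x‖, ‖y‖ ≤ M and ‖x − y‖ < ω(M, ε) imply ‖Jx − Jy‖ < ε). Let C ⊆ X be closed convex, S : C → C nonexpansive with a fixed point p, and let u, x₀ ∈ C and M > 0 with 2·max{‖p − x₀‖, ‖p − u‖} ≤ M. For each integer m ≥ 1 let z_m ∈ C satisfy z_m = (1/m) u + (1 − 1/m) S z_m, and suppose K is a rate of metastability for (z_m): for every ε > 0 and every g : ℕ → ℕ there exists n ≤ K(ε, g) with ‖z_k − z_l‖ ≤ ε for all k, l ∈ [n, n + g(n)]. Let (α_n) ⊆ (0,1) and R₁, R₂, R₃ : (0,∞) → ℕ satisfy: α_n ≤ ε for n ≥ R₁(ε); ∏_{k=0}^{R₂(ε)} (1 − α_k) ≤ ε; |α_n − α_{n−1}| ≤ ε·α_n for n ≥ R₃(ε); and let E : ℕ → (0,∞) satisfy 0 < E(k) ≤ ∏_{n=0}^{k} (1 − α_n) for all k. Let (x_n) be the Halpern iteration x_{n+1}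 := α_n u + (1 − α_n) S x_n. Then for every ε > 0 and every g : ℕ → ℕ there exists n ≤ Σ such that ‖x_k − x_l‖ ≤ ε for all k, l ∈ [n, n + g(n)], where Σ is defined by: δ := ε²/(144M); ε₀ := min{δ, ω(M, δ)}; D(ε′) := E(R₃(ε′/(3M))); ψ(ε′) := max{R₁(ε′/(2M)), R₂(ε′·D(ε′/2)/(6M)), R₃(ε′/(6M))}; φ(k) := ψ(ε²/(72 M k)); m₀ := ⌈72 M²/ε²⌉; g*(k) := k + g(k); Ẽ(k) := E(φ(k)); f(k) := ⌈max{24 M²·(max{g*(R₂(Ẽ(k)·ε²/(12 M²))), φ(k) + 1} − φ(k) − 1)/ε² − k, 0}⌉; f*(k) := f(k + m₀) + m₀; Γ := max{φ(k) : m₀ ≤ k ≤ K(ε₀, f*) + m₀}; Γ̃ := min{φ(k) : m₀ ≤ k ≤ K(ε₀, f*) + m₀}; and Σ := max{max{R₂(E(k)·ε²/(12 M²)), k + 1} : Γ̃ ≤ k ≤ Γ}. -/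

import Mathlib

open Finset in
lemma halpern_unroll (β a : ℕ → ℝ) (c d : ℝ) (N : ℕ)
    (hc : 0 ≤ c) (hd : 0 ≤ d)
    (hβ : ∀ k, 0 ≤ β k ∧ β k ≤ 1)
    (hrec : ∀ k, N ≤ k → a (k + 1) ≤ (1 - β k) * a k + β k * c + d) :
    ∀ n, N ≤ n →
      a n ≤ (∏ k ∈ Finset.Ico N n, (1 - β k)) * a N + c + ((n - N : ℕ) : ℝ) * d := by
  intro n hn
  induction n, hn using Nat.le_induction with
  | base =>
      simp only [Finset.Ico_self, Finset.prod_empty, Nat.sub_self, Nat.cast_zero, one_mul,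
        zero_mul, add_zero]
      linarith
  | succ n hn ih =>
      have h1 := hrec n hn
      have hβn := hβ n
      have hprod : ∏ k ∈ Finset.Ico N (n + 1), (1 - β k)
          = (∏ k ∈ Finset.Ico N n, (1 - β k)) * (1 - β n) :=
        Finset.prod_Ico_succ_top hn _
      have hnn : ((n + 1 - N : ℕ) : ℝ) = ((n - N : ℕ) : ℝ) + 1 := by
        have h : n + 1 - N = (n - N) + 1 := by omega
        rw [h]; push_cast; ring
      have h2 : (0:ℝ) ≤ ((n - N : ℕ) : ℝ) := Nat.cast_nonneg _
      calc a (n + 1) ≤ (1 - β n) * a n + β n * c + d := h1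
        _ ≤ (1 - β n) * ((∏ k ∈ Finset.Ico N n, (1 - β k)) * a N + c
              + ((n - N : ℕ) : ℝ) * d) + β n * c + d := by
            nlinarith [hβn.1, hβn.2, ih]
        _ ≤ _ := by
            rw [hprod, hnn]
            nlinarith [mul_nonneg (mul_nonneg hβn.1 h2) hd]

lemma halpern_normJ {X : Type*} [NormedAddCommGroup X] [NormedSpace ℝ X]
    (J : X → X →L[ℝ] ℝ)
    (hJ : ∀ v : X, J v v = ‖v‖ ^ 2 ∧ ‖J v‖ ^ 2 = ‖v‖ ^ 2) (v : X) : ‖J v‖ = ‖v‖ := by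
  have h := (hJ v).2
  have := congrArg Real.sqrt h
  rwa [Real.sqrt_sq (norm_nonneg _), Real.sqrt_sq (norm_nonneg _)] at this

lemma halpern_J_le {X : Type*} [NormedAddCommGroup X] [NormedSpace ℝ X]
    (J : X → X →L[ℝ] ℝ)
    (hJ : ∀ v : X, J v v = ‖v‖ ^ 2 ∧ ‖J v‖ ^ 2 = ‖v‖ ^ 2) (v w : X) :
    J v w ≤ ‖v‖ * ‖w‖ := by
  calc J v w ≤ |J v w| := le_abs_self _
    _ ≤ ‖J v‖ * ‖w‖ := (J v).le_opNorm w
    _ = ‖v‖ * ‖w‖ := by rw [halpern_normJ J hJ]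

lemma halpern_sq_ineq {X : Type*} [NormedAddCommGroup X] [NormedSpace ℝ X]
    (J : X → X →L[ℝ] ℝ)
    (hJ : ∀ v : X, J v v = ‖v‖ ^ 2 ∧ ‖J v‖ ^ 2 = ‖v‖ ^ 2) (a b : X) :
    ‖a + b‖ ^ 2 ≤ ‖a‖ ^ 2 + 2 * J (a + b) b := by
  have h4 : ‖a + b‖ ^ 2 = J (a + b) a + J (a + b) b := by
    rw [← (hJ (a + b)).1, map_add]
  have h3 : J (a + b) a ≤ ‖a + b‖ * ‖a‖ := halpern_J_le J hJ (a + b) a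
  nlinarith [sq_nonneg (‖a + b‖ - ‖a‖)]

lemma halpern_J_cont {X : Type*} [NormedAddCommGroup X] [NormedSpace ℝ X]
    (J : X → X →L[ℝ] ℝ) (ω : ℝ → ℝ → ℝ) (M δ : ℝ) (hδ : 0 < δ)
    (hωpos : ∀ η : ℝ, 0 < η → 0 < ω M η)
    (hω : ∀ η : ℝ, 0 < η → ∀ v w : X, ‖v‖ ≤ M → ‖w‖ ≤ M →
      ‖v - w‖ < ω M η → ‖J v - J w‖ < η)
    (v w : X) (hv : ‖v‖ ≤ M) (hw : ‖w‖ ≤ M) (hvw : ‖v - w‖ ≤ ω M δ) :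
    ‖J v - J w‖ ≤ δ := by
  rcases eq_or_ne v w with rfl | hne
  · simp [hδ.le]
  have hr : 0 < ‖w - v‖ := by
    rw [norm_sub_rev]; exact norm_sub_pos_iff.mpr hne
  refine le_of_forall_pos_le_add fun η hη => ?_
  set r := ‖w - v‖ with hrdef
  set s := min (ω M η / r) 1 / 2 with hs
  have hs0 : 0 < s := by
    have := div_pos (hωpos η hη) hr
    have h1 : (0:ℝ) < min (ω M η / r) 1 := lt_min this one_pos
    positivity
  have hs1 : s ≤ 1 / 2 := by
    have : min (ω M η / r) 1 ≤ 1 := min_le_right _ _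
    rw [hs]; linarith
  set q := v + (1 - s) • (w - v) with hq
  have hqd : q = s • v + (1 - s) • w := by rw [hq]; module
  have hqM : ‖q‖ ≤ M := by
    rw [hqd]
    calc ‖s • v + (1 - s) • w‖ ≤ ‖s • v‖ + ‖(1 - s) • w‖ := norm_add_le _ _
      _ = s * ‖v‖ + (1 - s) * ‖w‖ := by
          rw [norm_smul, norm_smul, Real.norm_eq_abs, Real.norm_eq_abs,
            abs_of_nonneg hs0.le, abs_of_nonneg (by linarith : (0:ℝ) ≤ 1 - s)]
      _ ≤ s * M + (1 - s) * M := by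
          have h1 : (0:ℝ) ≤ s := hs0.le
          have h2 : (0:ℝ) ≤ 1 - s := by linarith
          gcongr
      _ = M := by ring
  have h1 : ‖v - q‖ < ω M δ := by
    have he : v - q = -((1 - s) • (w - v)) := by rw [hq]; module
    rw [he, norm_neg, norm_smul, Real.norm_eq_abs,
      abs_of_nonneg (by linarith : (0:ℝ) ≤ 1 - s)]
    have hvw' : r ≤ ω M δ := by rwa [norm_sub_rev] at hvw
    nlinarith
  have h2 : ‖q - w‖ < ω M η := by
    have he : q - w = -(s • (w - v)) := by rw [hq]; module
    rw [he, norm_neg, norm_smul, Real.norm_eq_abs, abs_of_nonneg hs0.le]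
    have hsle : s ≤ ω M η / r / 2 := by
      rw [hs]
      have := min_le_left (ω M η / r) 1
      linarith
    have : s * r ≤ ω M η / 2 := by
      rw [div_div] at hsle
      calc s * r ≤ ω M η / (r * 2) * r := by nlinarith
        _ = ω M η / 2 := by field_simp
    nlinarith [hωpos η hη]
  have t1 : ‖J v - J q‖ < δ := hω δ hδ v q hv hqM h1
  have t2 : ‖J q - J w‖ < η := hω η hη q w hqM hw h2
  calc ‖J v - J w‖ = ‖(J v - J q) + (J q - J w)‖ := by rw [sub_add_sub_cancel]
    _ ≤ ‖J v - J q‖ + ‖J q - J w‖ := norm_add_le _ _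
    _ ≤ δ + η := by linarith


set_option maxHeartbeats 2000000 in

open Finset in
/-- Rate of metastability for the Halpern iteration in Banach spaces with a
uniformly continuous duality selection mapping, relative to a rate of
metastability `K` for the resolvent `(z_m)` (quantitative version of Xu's
theorem). -/
theorem halpern_metastability
    {X : Type*} [NormedAddCommGroup X] [NormedSpace ℝ X] [CompleteSpace X]
    (J : X → X →L[ℝ] ℝ)
    (hJ : ∀ v : X, J v v = ‖v‖ ^ 2 ∧ ‖J v‖ ^ 2 = ‖v‖ ^ 2)
    (ω : ℝ → ℝ → ℝ)
    (hωpos : ∀ M' > (0 : ℝ), ∀ ε' > (0 : ℝ), 0 < ω M' ε')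
    (hω : ∀ M' > (0 : ℝ), ∀ ε' > (0 : ℝ), ∀ v w : X,
      ‖v‖ ≤ M' → ‖w‖ ≤ M' → ‖v - w‖ < ω M' ε' → ‖J v - J w‖ < ε')
    (C : Set X) (hCclosed : IsClosed C) (hCconv : Convex ℝ C)
    (S : X → X) (hSmaps : Set.MapsTo S C C)
    (hSne : ∀ v ∈ C, ∀ w ∈ C, ‖S v - S w‖ ≤ ‖v - w‖)
    (p : X) (hp : p ∈ C) (hpfix : S p = p)
    (u x₀ : X) (hu : u ∈ C) (hx₀ : x₀ ∈ C)
    (M : ℝ) (hM : 0 < M)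
    (hbound : 2 * max ‖p - x₀‖ ‖p - u‖ ≤ M)
    (z : ℕ → X) (hzC : ∀ m : ℕ, 1 ≤ m → z m ∈ C)
    (hz : ∀ m : ℕ, 1 ≤ m →
      z m = (1 / m : ℝ) • u + (1 - 1 / m : ℝ) • S (z m))
    (K : ℝ → (ℕ → ℕ) → ℕ)
    (hK : ∀ ε > (0 : ℝ), ∀ g : ℕ → ℕ, ∃ n ≤ K ε g,
      ∀ k ∈ Set.Icc n (n + g n), ∀ l ∈ Set.Icc n (n + g n), ‖z k - z l‖ ≤ ε)
    (α : ℕ → ℝ) (hα : ∀ n, α n ∈ Set.Ioo (0 : ℝ) 1)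
    (R₁ R₂ R₃ : ℝ → ℕ)
    (hR₁ : ∀ ε > (0 : ℝ), ∀ n, R₁ ε ≤ n → α n ≤ ε)
    (hR₂ : ∀ ε > (0 : ℝ), ∏ k ∈ Finset.range (R₂ ε + 1), (1 - α k) ≤ ε)
    (hR₃ : ∀ ε > (0 : ℝ), ∀ n, R₃ ε ≤ n → |α n - α (n - 1)| ≤ ε * α n)
    (E : ℕ → ℝ)
    (hE : ∀ k : ℕ, 0 < E k ∧ E k ≤ ∏ n ∈ Finset.range (k + 1), (1 - α n))
    (x : ℕ → X) (hx0 : x 0 = x₀)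
    (hx : ∀ n, x (n + 1) = α n • u + (1 - α n) • S (x n)) :
    ∀ ε > (0 : ℝ), ∀ g : ℕ → ℕ,
      let δ : ℝ := ε ^ 2 / (144 * M)
      let ε₀ : ℝ := min δ (ω M δ)
      let D : ℝ → ℝ := fun ε' => E (R₃ (ε' / (3 * M)))
      let ψ : ℝ → ℕ := fun ε' =>
        max (R₁ (ε' / (2 * M)))
          (max (R₂ (ε' * D (ε' / 2) / (6 * M))) (R₃ (ε' / (6 * M))))
      let φ : ℕ → ℕ := fun k => ψ (ε ^ 2 / (72 * M * k))
      let m₀ : ℕ := ⌈72 * M ^ 2 / ε ^ 2⌉₊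
      let gs : ℕ → ℕ := fun k => k + g k
      let Et : ℕ → ℝ := fun k => E (φ k)
      let f : ℕ → ℕ := fun k =>
        ⌈max (24 * M ^ 2 *
            ((max ((gs (R₂ (Et k * ε ^ 2 / (12 * M ^ 2)))) : ℝ) ((φ k : ℝ) + 1)
              - (φ k : ℝ) - 1)) / ε ^ 2 - (k : ℝ)) 0⌉₊
      let fs : ℕ → ℕ := fun k => f (k + m₀) + m₀
      let Γ : ℕ := (Finset.Icc m₀ (K ε₀ fs + m₀)).sup φ
      let Γt : ℕ := sInf (φ '' Set.Icc m₀ (K ε₀ fs + m₀))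
      let Sig : ℕ := (Finset.Icc Γt Γ).sup
        (fun k => max (R₂ (E k * ε ^ 2 / (12 * M ^ 2))) (k + 1))
      ∃ n ≤ Sig, ∀ k ∈ Set.Icc n (n + g n), ∀ l ∈ Set.Icc n (n + g n),
        ‖x k - x l‖ ≤ ε := by
  intro ε hε g
  intro δ ε₀ D ψ φ m₀ gs Et f fs Γ Γt Sig
  -- basic facts
  have hxC : ∀ n, x n ∈ C ∧ ‖x n - p‖ ≤ M / 2 := by
    intro n
    induction n with
    | zero =>
        refine ⟨hx0 ▸ hx₀, ?_⟩
        rw [hx0, norm_sub_rev]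
        have := le_max_left ‖p - x₀‖ ‖p - u‖
        linarith
    | succ n ih =>
        have hα' := hα n
        constructor
        · rw [hx n]
          exact hCconv hu (hSmaps ih.1) hα'.1.le (by linarith [hα'.2]) (by ring)
        · have heq : x (n + 1) - p = α n • (u - p) + (1 - α n) • (S (x n) - p) := by
            rw [hx n]; module
          have hSn : ‖S (x n) - p‖ ≤ M / 2 := by
            calc ‖S (x n) - p‖ = ‖S (x n) - S p‖ := by rw [hpfix]
              _ ≤ ‖x n - p‖ := hSne (x n) ih.1 p hp
              _ ≤ M / 2 := ih.2
          have hup : ‖u - p‖ ≤ M / 2 := by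
            rw [norm_sub_rev]
            have := le_max_right ‖p - x₀‖ ‖p - u‖
            linarith
          calc ‖x (n + 1) - p‖ = ‖α n • (u - p) + (1 - α n) • (S (x n) - p)‖ := by
                rw [heq]
            _ ≤ ‖α n • (u - p)‖ + ‖(1 - α n) • (S (x n) - p)‖ := norm_add_le _ _
            _ = α n * ‖u - p‖ + (1 - α n) * ‖S (x n) - p‖ := by
                rw [norm_smul, norm_smul, Real.norm_eq_abs, Real.norm_eq_abs,
                  abs_of_nonneg hα'.1.le, abs_of_nonneg (by linarith [hα'.2])]
            _ ≤ α n * (M / 2) + (1 - α n) * (M / 2) := by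
                have h1 : (0:ℝ) ≤ α n := hα'.1.le
                have h2 : (0:ℝ) ≤ 1 - α n := by linarith [hα'.2]
                gcongr
            _ = M / 2 := by ring
  have hup : ‖u - p‖ ≤ M / 2 := by
    rw [norm_sub_rev]
    have := le_max_right ‖p - x₀‖ ‖p - u‖
    linarith
  have hzp : ∀ m : ℕ, 1 ≤ m → ‖z m - p‖ ≤ M / 2 := by
    intro m hm
    have hw := hz m hm
    have hm1 : (1:ℝ) ≤ (m:ℝ) := by exact_mod_cast hm
    have hm0 : (0:ℝ) < (m:ℝ) := by linarith
    have hSz : ‖S (z m) - p‖ ≤ ‖z m - p‖ := by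
      calc ‖S (z m) - p‖ = ‖S (z m) - S p‖ := by rw [hpfix]
        _ ≤ ‖z m - p‖ := hSne (z m) (hzC m hm) p hp
    have h1 : z m - p = (1 / (m:ℝ)) • (u - p) + (1 - 1 / (m:ℝ)) • (S (z m) - p) := by
      nth_rewrite 1 [hw]; module
    have ht0 : (0:ℝ) < 1 / (m:ℝ) := by positivity
    have ht1 : 1 / (m:ℝ) ≤ 1 := by
      rw [div_le_one hm0]; exact hm1
    have h2 : ‖z m - p‖ ≤ (1 / (m:ℝ)) * (M / 2) + (1 - 1 / (m:ℝ)) * ‖z m - p‖ := by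
      calc ‖z m - p‖ ≤ ‖(1 / (m:ℝ)) • (u - p)‖ + ‖(1 - 1 / (m:ℝ)) • (S (z m) - p)‖ := by
            rw [h1]; exact norm_add_le _ _
        _ = (1 / (m:ℝ)) * ‖u - p‖ + (1 - 1 / (m:ℝ)) * ‖S (z m) - p‖ := by
            rw [norm_smul, norm_smul, Real.norm_eq_abs, Real.norm_eq_abs,
              abs_of_nonneg ht0.le, abs_of_nonneg (by linarith)]
        _ ≤ (1 / (m:ℝ)) * (M / 2) + (1 - 1 / (m:ℝ)) * ‖z m - p‖ := by
            have : (0:ℝ) ≤ 1 - 1 / (m:ℝ) := by linarith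
            gcongr
    nlinarith
  have hdist : ∀ v w : X, ‖v - p‖ ≤ M / 2 → ‖w - p‖ ≤ M / 2 → ‖v - w‖ ≤ M := by
    intro v w hv hw
    have h : v - w = (v - p) - (w - p) := by abel
    rw [h]
    calc ‖(v - p) - (w - p)‖ ≤ ‖v - p‖ + ‖w - p‖ := norm_sub_le _ _
      _ ≤ M := by linarith
  have hSxp : ∀ n, ‖S (x n) - p‖ ≤ M / 2 := by
    intro n
    calc ‖S (x n) - p‖ = ‖S (x n) - S p‖ := by rw [hpfix]
      _ ≤ ‖x n - p‖ := hSne (x n) (hxC n).1 p hp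
      _ ≤ M / 2 := (hxC n).2
  have hSzp : ∀ m : ℕ, 1 ≤ m → ‖S (z m) - p‖ ≤ M / 2 := by
    intro m hm
    calc ‖S (z m) - p‖ = ‖S (z m) - S p‖ := by rw [hpfix]
      _ ≤ ‖z m - p‖ := hSne (z m) (hzC m hm) p hp
      _ ≤ M / 2 := hzp m hm
  -- product facts
  have hPpos : ∀ n : ℕ, 0 < ∏ k ∈ Finset.range n, (1 - α k) :=
    fun n => Finset.prod_pos fun k _ => by linarith [(hα k).2]
  have hIcoPos : ∀ N n : ℕ, 0 ≤ ∏ k ∈ Finset.Ico N n, (1 - α k) :=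
    fun N n => Finset.prod_nonneg fun k _ => by linarith [(hα k).2]
  have hPanti : ∀ a b : ℕ, a ≤ b →
      (∏ k ∈ Finset.range b, (1 - α k)) ≤ ∏ k ∈ Finset.range a, (1 - α k) := by
    intro a b hab
    rw [← Finset.prod_range_mul_prod_Ico _ hab]
    have h1 : (∏ k ∈ Finset.Ico a b, (1 - α k)) ≤ 1 :=
      Finset.prod_le_one (fun i _ => by linarith [(hα i).2]) (fun i _ => by linarith [(hα i).1])
    nlinarith [hPpos a, hIcoPos a b]
  have hIcoMul : ∀ N n : ℕ, N ≤ n →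
      (∏ k ∈ Finset.range N, (1 - α k)) * ∏ k ∈ Finset.Ico N n, (1 - α k)
        = ∏ k ∈ Finset.range n, (1 - α k) :=
    fun N n h => Finset.prod_range_mul_prod_Ico _ h
  -- asymptotic regularity
  have hAR : ∀ ε' : ℝ, 0 < ε' → ∀ n, ψ ε' ≤ n →
      ‖x n - S (x n)‖ ≤ 5 * ε' / 6 ∧ ‖x (n + 1) - x n‖ ≤ ε' / 3 := by
    intro ε' hε'
    have hψdef : ψ ε' = max (R₁ (ε' / (2 * M)))
        (max (R₂ (ε' * E (R₃ (ε' / (6 * M))) / (6 * M))) (R₃ (ε' / (6 * M)))) := by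
      have hD : D (ε' / 2) = E (R₃ (ε' / (6 * M))) := by
        show E (R₃ (ε' / 2 / (3 * M))) = E (R₃ (ε' / (6 * M)))
        norm_num [div_div]
        ring_nf
      show max (R₁ (ε' / (2 * M)))
          (max (R₂ (ε' * D (ε' / 2) / (6 * M))) (R₃ (ε' / (6 * M)))) = _
      rw [hD]
    set N₃ := R₃ (ε' / (6 * M)) with hN₃
    set N₂ := R₂ (ε' * E N₃ / (6 * M)) with hN₂
    have hb : ∀ n, max N₂ N₃ ≤ n → ‖x (n + 1) - x n‖ ≤ ε' / 3 := by
      intro n hn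
      have hrec : ∀ k, N₃ ≤ k → ‖x (k + 1 + 1) - x (k + 1)‖ ≤
          (1 - α (k + 1)) * ‖x (k + 1) - x k‖ + α (k + 1) * (ε' / 6) + 0 := by
        intro k hk
        have hα1 := hα (k + 1)
        have hdiff : x (k + 2) - x (k + 1)
            = (α (k + 1) - α k) • (u - S (x k)) + (1 - α (k + 1)) • (S (x (k + 1)) - S (x k)) := by
          rw [hx (k + 1), hx k]; module
        have hR3ap := hR₃ (ε' / (6 * M)) (by positivity) (k + 1) (by omega)
        have hk1 : (k + 1) - 1 = k := by omega
        rw [hk1] at hR3ap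
        have huS : ‖u - S (x k)‖ ≤ M := hdist u (S (x k)) hup (hSxp k)
        have hSS : ‖S (x (k + 1)) - S (x k)‖ ≤ ‖x (k + 1) - x k‖ :=
          hSne _ (hxC (k + 1)).1 _ (hxC k).1
        calc ‖x (k + 1 + 1) - x (k + 1)‖
            = ‖(α (k + 1) - α k) • (u - S (x k)) + (1 - α (k + 1)) • (S (x (k + 1)) - S (x k))‖ := by
              rw [show k + 1 + 1 = k + 2 from rfl, hdiff]
          _ ≤ ‖(α (k + 1) - α k) • (u - S (x k))‖ + ‖(1 - α (k + 1)) • (S (x (k + 1)) - S (x k))‖ :=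
              norm_add_le _ _
          _ = |α (k + 1) - α k| * ‖u - S (x k)‖ + (1 - α (k + 1)) * ‖S (x (k + 1)) - S (x k)‖ := by
              rw [norm_smul, norm_smul, Real.norm_eq_abs, Real.norm_eq_abs,
                abs_of_nonneg (by linarith [hα1.2] : (0:ℝ) ≤ 1 - α (k + 1))]
          _ ≤ (ε' / (6 * M) * α (k + 1)) * M + (1 - α (k + 1)) * ‖x (k + 1) - x k‖ := by
              have h1 : (0:ℝ) ≤ 1 - α (k + 1) := by linarith [hα1.2]
              have h2 : (0:ℝ) ≤ |α (k + 1) - α k| := abs_nonneg _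
              have h3 : (0:ℝ) ≤ ε' / (6 * M) * α (k + 1) := mul_nonneg (by positivity) (hα (k + 1)).1.le
              gcongr
          _ = (1 - α (k + 1)) * ‖x (k + 1) - x k‖ + α (k + 1) * (ε' / 6) + 0 := by
              field_simp
              ring
      have hunroll := halpern_unroll (fun k => α (k + 1)) (fun k => ‖x (k + 1) - x k‖)
        (ε' / 6) 0 N₃ (by positivity) le_rfl
        (fun k => ⟨(hα (k + 1)).1.le, (hα (k + 1)).2.le⟩) hrec n (le_trans (le_max_right _ _) hn)
      simp only [Nat.cast_nonneg, mul_zero, add_zero] at hunroll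
      have hshift : (∏ k ∈ Finset.Ico N₃ n, (1 - α (k + 1)))
          = ∏ k ∈ Finset.Ico (N₃ + 1) (n + 1), (1 - α k) := by
        rw [Finset.prod_Ico_eq_prod_range, Finset.prod_Ico_eq_prod_range]
        rw [show n + 1 - (N₃ + 1) = n - N₃ from by omega]
        exact Finset.prod_congr rfl fun i _ => by rw [show N₃ + 1 + i = N₃ + i + 1 from by omega]
      have hEN₃ := hE N₃
      have hPN₃ : E N₃ ≤ ∏ k ∈ Finset.range (N₃ + 1), (1 - α k) := hEN₃.2
      have hprodle : (∏ k ∈ Finset.Ico N₃ n, (1 - α (k + 1))) ≤ ε' / (6 * M) := by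
        rw [hshift]
        have hprod2 : (∏ k ∈ Finset.range (N₃ + 1), (1 - α k))
            * ∏ k ∈ Finset.Ico (N₃ + 1) (n + 1), (1 - α k)
            = ∏ k ∈ Finset.range (n + 1), (1 - α k) := hIcoMul _ _ (by omega)
        have hEN₃pos := hEN₃.1
        have hsmall : (∏ k ∈ Finset.range (n + 1), (1 - α k)) ≤ ε' * E N₃ / (6 * M) := by
          calc (∏ k ∈ Finset.range (n + 1), (1 - α k))
              ≤ ∏ k ∈ Finset.range (N₂ + 1), (1 - α k) := hPanti _ _ (by omega)
            _ ≤ ε' * E N₃ / (6 * M) := hR₂ _ (by positivity)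
        have hQ0 : 0 ≤ ∏ k ∈ Finset.Ico (N₃ + 1) (n + 1), (1 - α k) := hIcoPos _ _
        have h6M : (0:ℝ) < 6 * M := by linarith
        rw [← mul_le_mul_iff_left₀ hEN₃.1]
        calc (∏ k ∈ Finset.Ico (N₃ + 1) (n + 1), (1 - α k)) * E N₃
            ≤ (∏ k ∈ Finset.Ico (N₃ + 1) (n + 1), (1 - α k))
              * ∏ k ∈ Finset.range (N₃ + 1), (1 - α k) := by gcongr
          _ = ∏ k ∈ Finset.range (n + 1), (1 - α k) := by rw [mul_comm]; exact hprod2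
          _ ≤ ε' * E N₃ / (6 * M) := hsmall
          _ = ε' / (6 * M) * E N₃ := by ring
      have hbN₃ : ‖x (N₃ + 1) - x N₃‖ ≤ M := hdist _ _ (hxC _).2 (hxC _).2
      have hbN₃0 : (0:ℝ) ≤ ‖x (N₃ + 1) - x N₃‖ := norm_nonneg _
      calc ‖x (n + 1) - x n‖
          ≤ (∏ k ∈ Finset.Ico N₃ n, (1 - α (k + 1))) * ‖x (N₃ + 1) - x N₃‖ + ε' / 6 := hunroll
        _ ≤ (ε' / (6 * M)) * M + ε' / 6 := by
            have := hIcoPos N₃ n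
            have h0 : 0 ≤ ∏ k ∈ Finset.Ico N₃ n, (1 - α (k + 1)) :=
              Finset.prod_nonneg fun k _ => by linarith [(hα (k + 1)).2]
            gcongr
        _ = ε' / 3 := by field_simp; ring
    intro n hn
    rw [hψdef] at hn
    have hn23 : max N₂ N₃ ≤ n := le_trans (le_max_right _ _) hn
    have hbn := hb n hn23
    refine ⟨?_, hbn⟩
    have hxS : x (n + 1) - S (x n) = α n • (u - S (x n)) := by
      rw [hx n]; module
    have hα1 := hR₁ (ε' / (2 * M)) (by positivity) n (le_trans (le_max_left _ _) hn)
    have h2 : ‖x (n + 1) - S (x n)‖ ≤ ε' / 2 := by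
      rw [hxS, norm_smul, Real.norm_eq_abs, abs_of_nonneg (hα n).1.le]
      calc α n * ‖u - S (x n)‖ ≤ (ε' / (2 * M)) * M := by
            have := hdist u (S (x n)) hup (hSxp n)
            have h0 : (0:ℝ) ≤ α n := (hα n).1.le
            gcongr
        _ = ε' / 2 := by field_simp
    calc ‖x n - S (x n)‖ = ‖(x n - x (n + 1)) + (x (n + 1) - S (x n))‖ := by
          rw [sub_add_sub_cancel]
      _ ≤ ‖x n - x (n + 1)‖ + ‖x (n + 1) - S (x n)‖ := norm_add_le _ _
      _ = ‖x (n + 1) - x n‖ + ‖x (n + 1) - S (x n)‖ := by rw [norm_sub_rev]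
      _ ≤ ε' / 3 + ε' / 2 := add_le_add hbn h2
      _ = 5 * ε' / 6 := by ring
  -- resolvent facts
  have hzeq : ∀ m : ℕ, 1 ≤ m → z m - S (z m) = (1 / (m:ℝ)) • (u - S (z m)) := by
    intro m hm
    nth_rewrite 1 [hz m hm]
    module
  have hzreg : ∀ m : ℕ, 1 ≤ m → ‖z m - S (z m)‖ ≤ M / m := by
    intro m hm
    have hm0 : (0:ℝ) < (m:ℝ) := by exact_mod_cast hm
    rw [hzeq m hm, norm_smul, Real.norm_eq_abs,
      abs_of_nonneg (by positivity : (0:ℝ) ≤ 1 / (m:ℝ))]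
    have h := hdist u (S (z m)) hup (hSzp m hm)
    calc 1 / (m:ℝ) * ‖u - S (z m)‖ ≤ 1 / (m:ℝ) * M := by
          have h0 : (0:ℝ) ≤ 1 / (m:ℝ) := by positivity
          gcongr
      _ = M / m := by ring
  have hukey : ∀ m : ℕ, 1 ≤ m → u - z m = ((m:ℝ) - 1) • (z m - S (z m)) := by
    intro m hm
    have hm0 : ((m:ℝ)) ≠ 0 := by
      have : (0:ℝ) < (m:ℝ) := by exact_mod_cast hm
      linarith
    rw [hzeq m hm]
    nth_rewrite 1 [hz m hm]
    match_scalars <;> field_simp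
  have hkey : ∀ m : ℕ, 1 ≤ m → ∀ i,
      J (x i - z m) (u - z m) ≤ (m:ℝ) * M * ‖x i - S (x i)‖ := by
    intro m hm i
    have hv : ‖x i - z m‖ ≤ M := hdist _ _ (hxC i).2 (hzp m hm)
    have hdec : z m - S (z m) = ((z m - x i) + (x i - S (x i))) + (S (x i) - S (z m)) := by abel
    have h1 : J (x i - z m) (z m - x i) = -‖x i - z m‖ ^ 2 := by
      rw [show z m - x i = -(x i - z m) from by abel, map_neg, (hJ _).1]
    have h2 : J (x i - z m) (x i - S (x i)) ≤ M * ‖x i - S (x i)‖ := by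
      calc J (x i - z m) (x i - S (x i)) ≤ ‖x i - z m‖ * ‖x i - S (x i)‖ :=
            halpern_J_le J hJ _ _
        _ ≤ M * ‖x i - S (x i)‖ := by
            have := norm_nonneg (x i - S (x i))
            gcongr
    have h3 : J (x i - z m) (S (x i) - S (z m)) ≤ ‖x i - z m‖ ^ 2 := by
      calc J (x i - z m) (S (x i) - S (z m)) ≤ ‖x i - z m‖ * ‖S (x i) - S (z m)‖ :=
            halpern_J_le J hJ _ _
        _ ≤ ‖x i - z m‖ * ‖x i - z m‖ := by
            have := norm_nonneg (x i - z m)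
            gcongr
            exact hSne _ (hxC i).1 _ (hzC m hm)
        _ = ‖x i - z m‖ ^ 2 := by ring
    have h4 : J (x i - z m) (z m - S (z m)) ≤ M * ‖x i - S (x i)‖ := by
      rw [hdec, map_add, map_add]
      linarith
    rw [hukey m hm, map_smul, smul_eq_mul]
    have hm1 : (1:ℝ) ≤ (m:ℝ) := by exact_mod_cast hm
    have h5 : (0:ℝ) ≤ M * ‖x i - S (x i)‖ := by positivity
    nlinarith [mul_le_mul_of_nonneg_left h4 (by linarith : (0:ℝ) ≤ (m:ℝ) - 1)]
  -- main construction
  by_cases hεM : M ≤ ε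
  · refine ⟨0, Nat.zero_le _, fun k _ l _ => ?_⟩
    calc ‖x k - x l‖ ≤ M := hdist _ _ (hxC k).2 (hxC l).2
      _ ≤ ε := hεM
  push_neg at hεM
  have hδpos : 0 < δ := by show (0:ℝ) < ε ^ 2 / (144 * M); positivity
  have hε₀pos : 0 < ε₀ := lt_min hδpos (hωpos M hM δ hδpos)
  obtain ⟨n₀, hn₀le, hn₀⟩ := hK ε₀ hε₀pos fs
  set m := n₀ + m₀ with hmdef
  have hm₀' : (72 * M ^ 2 / ε ^ 2 : ℝ) ≤ (m₀ : ℝ) := Nat.le_ceil _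
  have hm₀pos : 0 < m₀ := Nat.ceil_pos.mpr (by positivity)
  have hm1 : 1 ≤ m := by rw [hmdef]; omega
  have hmge : 72 * M ^ 2 / ε ^ 2 ≤ (m:ℝ) := by
    refine le_trans hm₀' ?_
    exact_mod_cast Nat.le_add_left m₀ n₀
  have hmposR : (0:ℝ) < (m:ℝ) := by exact_mod_cast hm1
  set m' := m + f m with hm'def
  have hm'1 : 1 ≤ m' := by rw [hm'def]; omega
  have hmm' : m ≤ m' := by rw [hm'def]; omega
  have hm'ge : 72 * M ^ 2 / ε ^ 2 ≤ (m':ℝ) := by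
    refine le_trans hmge ?_
    exact_mod_cast hmm'
  have hm'posR : (0:ℝ) < (m':ℝ) := by exact_mod_cast hm'1
  have hfs : n₀ + fs n₀ = m' := by
    have h1 : fs n₀ = f (n₀ + m₀) + m₀ := rfl
    rw [h1, ← hmdef, hm'def, hmdef]
    omega
  have hzz : ‖z m - z m'‖ ≤ ε₀ := by
    refine hn₀ m (Set.mem_Icc.mpr ⟨by rw [hmdef]; omega, by rw [hfs]; exact hmm'⟩)
      m' (Set.mem_Icc.mpr ⟨le_trans (by rw [hmdef]; omega) hmm', by rw [hfs]⟩)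
  have hφψ : φ m = ψ (ε ^ 2 / (72 * M * (m:ℝ))) := rfl
  have hεmpos : 0 < ε ^ 2 / (72 * M * (m:ℝ)) := by
    apply div_pos (by positivity)
    nlinarith
  have har : ∀ i, φ m ≤ i →
      ‖x i - S (x i)‖ ≤ 5 * (ε ^ 2 / (72 * M * (m:ℝ))) / 6 ∧
      ‖x (i + 1) - x i‖ ≤ (ε ^ 2 / (72 * M * (m:ℝ))) / 3 :=
    fun i hi => hAR _ hεmpos i (hφψ ▸ hi)
  have hδM : δ * M = ε ^ 2 / 144 := by
    show ε ^ 2 / (144 * M) * M = ε ^ 2 / 144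
    field_simp
  have hγ : ∀ i : ℕ, φ m ≤ i + 1 →
      J (x (i + 1) - z m') (u - z m') ≤ 11 * ε ^ 2 / 432 := by
    intro i hi
    have hv'M : ‖x (i + 1) - z m'‖ ≤ M := hdist _ _ (hxC _).2 (hzp m' hm'1)
    have hvM : ‖x (i + 1) - z m‖ ≤ M := hdist _ _ (hxC _).2 (hzp m hm1)
    have ht1 : J (x (i + 1) - z m) (u - z m) ≤ 5 * ε ^ 2 / 432 := by
      have h := hkey m hm1 (i + 1)
      have har1 := (har (i + 1) hi).1
      have hmM : (0:ℝ) ≤ (m:ℝ) * M := by positivity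
      calc J (x (i + 1) - z m) (u - z m) ≤ (m:ℝ) * M * ‖x (i + 1) - S (x (i + 1))‖ := h
        _ ≤ (m:ℝ) * M * (5 * (ε ^ 2 / (72 * M * (m:ℝ))) / 6) := by gcongr
        _ = 5 * ε ^ 2 / 432 := by
            field_simp
            ring
    have hJc : ‖J (x (i + 1) - z m') - J (x (i + 1) - z m)‖ ≤ δ := by
      apply halpern_J_cont J ω M δ hδpos (fun η hη => hωpos M hM η hη)
        (fun η hη => hω M hM η hη) _ _ hv'M hvM
      rw [show (x (i + 1) - z m') - (x (i + 1) - z m) = z m - z m' from by abel]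
      exact le_trans hzz (min_le_right _ _)
    have ht2 : (J (x (i + 1) - z m') - J (x (i + 1) - z m)) (u - z m) ≤ δ * M := by
      have huzm : ‖u - z m‖ ≤ M := hdist _ _ hup (hzp m hm1)
      calc (J (x (i + 1) - z m') - J (x (i + 1) - z m)) (u - z m)
          ≤ |(J (x (i + 1) - z m') - J (x (i + 1) - z m)) (u - z m)| := le_abs_self _
        _ ≤ ‖J (x (i + 1) - z m') - J (x (i + 1) - z m)‖ * ‖u - z m‖ :=
            (J (x (i + 1) - z m') - J (x (i + 1) - z m)).le_opNorm _
        _ ≤ δ * M := mul_le_mul hJc huzm (norm_nonneg _) hδpos.le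
    have ht3 : J (x (i + 1) - z m') (z m - z m') ≤ δ * M := by
      calc J (x (i + 1) - z m') (z m - z m') ≤ ‖x (i + 1) - z m'‖ * ‖z m - z m'‖ :=
            halpern_J_le J hJ _ _
        _ ≤ M * δ := mul_le_mul hv'M (le_trans hzz (min_le_left _ _)) (norm_nonneg _) hM.le
        _ = δ * M := mul_comm _ _
    have hsplit : J (x (i + 1) - z m') (u - z m')
        = J (x (i + 1) - z m) (u - z m)
          + (J (x (i + 1) - z m') - J (x (i + 1) - z m)) (u - z m)
          + J (x (i + 1) - z m') (z m - z m') := by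
      rw [ContinuousLinearMap.sub_apply]
      rw [show u - z m' = (u - z m) + (z m - z m') from by abel, map_add]
      ring
    rw [hsplit]
    rw [hδM] at ht2 ht3
    linarith
  -- main recursion
  have hrec2 : ∀ i, φ m ≤ i → ‖x (i + 1) - z m'‖ ^ 2 ≤
      (1 - α i) * ‖x i - z m'‖ ^ 2 + α i * (11 * ε ^ 2 / 216) + 2 * M ^ 2 / (m':ℝ) := by
    intro i hi
    have hα' := hα i
    have hzC' := hzC m' hm'1
    have hsplit : x (i + 1) - z m'
        = (1 - α i) • (S (x i) - S (z m'))
          + (α i • (u - z m') + (1 - α i) • (S (z m') - z m')) := by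
      rw [hx i]; module
    have hsq := halpern_sq_ineq J hJ ((1 - α i) • (S (x i) - S (z m')))
      (α i • (u - z m') + (1 - α i) • (S (z m') - z m'))
    rw [← hsplit] at hsq
    have hna : ‖(1 - α i) • (S (x i) - S (z m'))‖ ^ 2 ≤ (1 - α i) * ‖x i - z m'‖ ^ 2 := by
      rw [norm_smul, Real.norm_eq_abs, abs_of_nonneg (by linarith [hα'.2] : (0:ℝ) ≤ 1 - α i)]
      have hSS : ‖S (x i) - S (z m')‖ ≤ ‖x i - z m'‖ := hSne _ (hxC i).1 _ hzC'
      have h0 : (0:ℝ) ≤ ‖S (x i) - S (z m')‖ := norm_nonneg _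
      have h1 : (0:ℝ) ≤ 1 - α i := by linarith [hα'.2]
      have h2 : ‖S (x i) - S (z m')‖ ^ 2 ≤ ‖x i - z m'‖ ^ 2 := by
        nlinarith [norm_nonneg (x i - z m')]
      have h3 : (1 - α i) ^ 2 ≤ 1 - α i := by nlinarith [hα'.1, hα'.2]
      calc ((1 - α i) * ‖S (x i) - S (z m')‖) ^ 2
          = (1 - α i) ^ 2 * ‖S (x i) - S (z m')‖ ^ 2 := by ring
        _ ≤ (1 - α i) * ‖S (x i) - S (z m')‖ ^ 2 :=
            mul_le_mul_of_nonneg_right h3 (sq_nonneg _)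
        _ ≤ (1 - α i) * ‖x i - z m'‖ ^ 2 := mul_le_mul_of_nonneg_left h2 h1
    have hJb : J (x (i + 1) - z m') (α i • (u - z m') + (1 - α i) • (S (z m') - z m'))
        ≤ α i * (11 * ε ^ 2 / 432) + M ^ 2 / (m':ℝ) := by
      rw [map_add, map_smul, map_smul, smul_eq_mul, smul_eq_mul]
      have hg1 : J (x (i + 1) - z m') (u - z m') ≤ 11 * ε ^ 2 / 432 :=
        hγ i (le_trans hi (Nat.le_succ i))
      have hg2 : J (x (i + 1) - z m') (S (z m') - z m') ≤ M ^ 2 / (m':ℝ) := by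
        calc J (x (i + 1) - z m') (S (z m') - z m')
            ≤ ‖x (i + 1) - z m'‖ * ‖S (z m') - z m'‖ := halpern_J_le J hJ _ _
          _ ≤ M * (M / (m':ℝ)) := by
              refine mul_le_mul (hdist _ _ (hxC _).2 (hzp m' hm'1)) ?_ (norm_nonneg _) hM.le
              rw [norm_sub_rev]; exact hzreg m' hm'1
          _ = M ^ 2 / (m':ℝ) := by ring
      have hα2 : (0:ℝ) ≤ 1 - α i := by linarith [hα'.2]
      have hq : (0:ℝ) ≤ M ^ 2 / (m':ℝ) := by positivity
      have hb1 := mul_le_mul_of_nonneg_left hg1 hα'.1.le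
      have hb2 := mul_le_mul_of_nonneg_left hg2 hα2
      have hb3 : (1 - α i) * (M ^ 2 / (m':ℝ)) ≤ 1 * (M ^ 2 / (m':ℝ)) :=
        mul_le_mul_of_nonneg_right (by linarith [hα'.1]) hq
      linarith [hb1, hb2, hb3]
    calc ‖x (i + 1) - z m'‖ ^ 2
        ≤ ‖(1 - α i) • (S (x i) - S (z m'))‖ ^ 2
          + 2 * J (x (i + 1) - z m') (α i • (u - z m') + (1 - α i) • (S (z m') - z m')) := hsq
      _ ≤ (1 - α i) * ‖x i - z m'‖ ^ 2
            + 2 * (α i * (11 * ε ^ 2 / 432) + M ^ 2 / (m':ℝ)) := by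
          have h2Jb := mul_le_mul_of_nonneg_left hJb (by norm_num : (0:ℝ) ≤ 2)
          linarith [hna, h2Jb]
      _ = (1 - α i) * ‖x i - z m'‖ ^ 2 + α i * (11 * ε ^ 2 / 216) + 2 * M ^ 2 / (m':ℝ) := by
          ring
  have hc0 : (0:ℝ) ≤ 11 * ε ^ 2 / 216 := by positivity
  have hd0 : (0:ℝ) ≤ 2 * M ^ 2 / (m':ℝ) := by positivity
  have hunroll2 := halpern_unroll α (fun i => ‖x i - z m'‖ ^ 2) (11 * ε ^ 2 / 216)
    (2 * M ^ 2 / (m':ℝ)) (φ m) hc0 hd0 (fun k => ⟨(hα k).1.le, (hα k).2.le⟩) hrec2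
  set R := R₂ (E (φ m) * ε ^ 2 / (12 * M ^ 2)) with hRdef
  have hEφpos := (hE (φ m)).1
  have hcRpos : 0 < E (φ m) * ε ^ 2 / (12 * M ^ 2) := by positivity
  have hPR : (∏ k ∈ Finset.range (R + 1), (1 - α k)) ≤ E (φ m) * ε ^ 2 / (12 * M ^ 2) :=
    hR₂ _ hcRpos
  have hEφ : E (φ m) ≤ ∏ k ∈ Finset.range (φ m + 1), (1 - α k) := (hE (φ m)).2
  have hRge : φ m + 1 ≤ R := by
    by_contra hcon
    push_neg at hcon
    have h1 : (∏ k ∈ Finset.range (φ m + 1), (1 - α k))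
        ≤ ∏ k ∈ Finset.range (R + 1), (1 - α k) := hPanti _ _ (by omega)
    have h2 : E (φ m) * ε ^ 2 / (12 * M ^ 2) < E (φ m) := by
      rw [div_lt_iff₀ (by positivity : (0:ℝ) < 12 * M ^ 2)]
      have hx2 : ε ^ 2 < 12 * M ^ 2 := by nlinarith
      nlinarith [mul_pos hEφpos (sub_pos.mpr hx2)]
    linarith
  have hprodbound : ∀ i, R + 1 ≤ i →
      (∏ k ∈ Finset.Ico (φ m) i, (1 - α k)) ≤ ε ^ 2 / (12 * M ^ 2) := by
    intro i hi
    have hmul := hIcoMul (φ m) i (by omega)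
    have hPi : (∏ k ∈ Finset.range i, (1 - α k)) ≤ E (φ m) * ε ^ 2 / (12 * M ^ 2) :=
      le_trans (hPanti _ _ (by omega : R + 1 ≤ i)) hPR
    have hPφ : E (φ m) ≤ ∏ k ∈ Finset.range (φ m), (1 - α k) :=
      le_trans hEφ (hPanti _ _ (Nat.le_succ _))
    have hQ0 := hIcoPos (φ m) i
    rw [← mul_le_mul_iff_right₀ hEφpos]
    calc E (φ m) * ∏ k ∈ Finset.Ico (φ m) i, (1 - α k)
        ≤ (∏ k ∈ Finset.range (φ m), (1 - α k)) * ∏ k ∈ Finset.Ico (φ m) i, (1 - α k) := by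
          gcongr
      _ = ∏ k ∈ Finset.range i, (1 - α k) := hmul
      _ ≤ E (φ m) * ε ^ 2 / (12 * M ^ 2) := hPi
      _ = E (φ m) * (ε ^ 2 / (12 * M ^ 2)) := by ring
  have hgsφ : φ m + 1 ≤ gs R := by
    show φ m + 1 ≤ R + g R
    omega
  have hm'big : 24 * M ^ 2 * (((gs R : ℕ) : ℝ) - ((φ m : ℕ) : ℝ) - 1) / ε ^ 2 ≤ (m':ℝ) := by
    have hfmeq : f m = ⌈max (24 * M ^ 2 *
        ((max ((gs (R₂ (Et m * ε ^ 2 / (12 * M ^ 2)))) : ℝ) ((φ m : ℝ) + 1)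
          - (φ m : ℝ) - 1)) / ε ^ 2 - (m : ℝ)) 0⌉₊ := rfl
    have hEt : Et m = E (φ m) := rfl
    rw [hEt, ← hRdef] at hfmeq
    have hmax : (max ((gs R : ℕ) : ℝ) ((φ m : ℝ) + 1)) = ((gs R : ℕ) : ℝ) :=
      max_eq_left (by exact_mod_cast hgsφ)
    rw [hmax] at hfmeq
    have hle : max (24 * M ^ 2 * (((gs R : ℕ) : ℝ) - ((φ m : ℕ) : ℝ) - 1) / ε ^ 2 - (m:ℝ)) 0
        ≤ ((f m : ℕ) : ℝ) := by rw [hfmeq]; exact Nat.le_ceil _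
    have h1 : 24 * M ^ 2 * (((gs R : ℕ) : ℝ) - ((φ m : ℕ) : ℝ) - 1) / ε ^ 2 - (m:ℝ)
        ≤ ((f m : ℕ) : ℝ) := le_trans (le_max_left _ _) hle
    have h2 : ((m' : ℕ) : ℝ) = (m:ℝ) + ((f m : ℕ) : ℝ) := by
      rw [hm'def]; push_cast; ring
    linarith
  have habound : ∀ i, R + 1 ≤ i → i ≤ gs R → ‖x i - z m'‖ ^ 2 ≤ 53 * ε ^ 2 / 216 := by
    intro i hi1 hi2
    have hφi : φ m ≤ i := by omega
    have hun := hunroll2 i hφi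
    have haφ : ‖x (φ m) - z m'‖ ^ 2 ≤ M ^ 2 := by
      have h := hdist _ _ (hxC (φ m)).2 (hzp m' hm'1)
      nlinarith [norm_nonneg (x (φ m) - z m')]
    have hQ := hprodbound i hi1
    have hQ0 := hIcoPos (φ m) i
    have hterm1 : (∏ k ∈ Finset.Ico (φ m) i, (1 - α k)) * ‖x (φ m) - z m'‖ ^ 2
        ≤ ε ^ 2 / 12 := by
      calc (∏ k ∈ Finset.Ico (φ m) i, (1 - α k)) * ‖x (φ m) - z m'‖ ^ 2
          ≤ (ε ^ 2 / (12 * M ^ 2)) * M ^ 2 :=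
            mul_le_mul hQ haφ (by positivity) (by positivity)
        _ = ε ^ 2 / 12 := by field_simp
    have hcast : ((i - φ m : ℕ) : ℝ) ≤ ((((gs R : ℕ) : ℝ) - ((φ m : ℕ) : ℝ) - 1) + 1) := by
      have h2 : ((i - φ m : ℕ) : ℝ) = (i:ℝ) - ((φ m : ℕ):ℝ) := by
        rw [Nat.cast_sub hφi]
      rw [h2]
      have h3 : (i:ℝ) ≤ ((gs R : ℕ):ℝ) := by exact_mod_cast hi2
      linarith
    have hterm3 : ((i - φ m : ℕ) : ℝ) * (2 * M ^ 2 / (m':ℝ)) ≤ ε ^ 2 / 12 + ε ^ 2 / 36 := by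
      have hT0 : (0:ℝ) ≤ ((gs R : ℕ) : ℝ) - ((φ m : ℕ) : ℝ) - 1 := by
        have : ((φ m : ℕ):ℝ) + 1 ≤ ((gs R : ℕ):ℝ) := by exact_mod_cast hgsφ
        linarith
      have h1 : ((i - φ m : ℕ) : ℝ) * (2 * M ^ 2 / (m':ℝ))
          ≤ ((((gs R : ℕ) : ℝ) - ((φ m : ℕ) : ℝ) - 1) + 1) * (2 * M ^ 2 / (m':ℝ)) := by
        gcongr
      have h24 : 24 * M ^ 2 * (((gs R : ℕ) : ℝ) - ((φ m : ℕ) : ℝ) - 1) ≤ (m':ℝ) * ε ^ 2 := by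
        rw [div_le_iff₀ (by positivity : (0:ℝ) < ε ^ 2)] at hm'big
        linarith
      have h2 : (((gs R : ℕ) : ℝ) - ((φ m : ℕ) : ℝ) - 1) * (2 * M ^ 2 / (m':ℝ)) ≤ ε ^ 2 / 12 := by
        rw [show (((gs R : ℕ) : ℝ) - ((φ m : ℕ) : ℝ) - 1) * (2 * M ^ 2 / (m':ℝ))
            = (2 * M ^ 2 * (((gs R : ℕ) : ℝ) - ((φ m : ℕ) : ℝ) - 1)) / (m':ℝ) from by ring,
          div_le_iff₀ hm'posR]
        nlinarith
      have h72 : 72 * M ^ 2 ≤ (m':ℝ) * ε ^ 2 := by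
        rw [div_le_iff₀ (by positivity : (0:ℝ) < ε ^ 2)] at hm'ge
        linarith
      have h3 : 1 * (2 * M ^ 2 / (m':ℝ)) ≤ ε ^ 2 / 36 := by
        rw [one_mul, div_le_iff₀ hm'posR]
        nlinarith
      calc ((i - φ m : ℕ) : ℝ) * (2 * M ^ 2 / (m':ℝ))
          ≤ ((((gs R : ℕ) : ℝ) - ((φ m : ℕ) : ℝ) - 1) + 1) * (2 * M ^ 2 / (m':ℝ)) := h1
        _ = (((gs R : ℕ) : ℝ) - ((φ m : ℕ) : ℝ) - 1) * (2 * M ^ 2 / (m':ℝ))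
            + 1 * (2 * M ^ 2 / (m':ℝ)) := by ring
        _ ≤ ε ^ 2 / 12 + ε ^ 2 / 36 := add_le_add h2 h3
    calc ‖x i - z m'‖ ^ 2
        ≤ (∏ k ∈ Finset.Ico (φ m) i, (1 - α k)) * ‖x (φ m) - z m'‖ ^ 2
          + 11 * ε ^ 2 / 216 + ((i - φ m : ℕ) : ℝ) * (2 * M ^ 2 / (m':ℝ)) := hun
      _ ≤ ε ^ 2 / 12 + 11 * ε ^ 2 / 216 + (ε ^ 2 / 12 + ε ^ 2 / 36) := by linarith
      _ = 53 * ε ^ 2 / 216 := by ring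
  have hxz : ∀ i, R + 1 ≤ i → i ≤ gs R → ‖x i - z m'‖ ≤ 149 / 300 * ε := by
    intro i h1 h2
    have h := habound i h1 h2
    by_contra hcon
    push_neg at hcon
    nlinarith [norm_nonneg (x i - z m'), hε]
  have hbR : ‖x (R + 1) - x R‖ ≤ ε / 150 := by
    have h := (har R (by omega : φ m ≤ R)).2
    refine le_trans h ?_
    have hm1R : (1:ℝ) ≤ (m:ℝ) := by exact_mod_cast hm1
    rw [show ε ^ 2 / (72 * M * (m:ℝ)) / 3 = ε ^ 2 / (216 * M * (m:ℝ)) from by ring,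
      div_le_div_iff₀ (by nlinarith : (0:ℝ) < 216 * M * (m:ℝ)) (by norm_num : (0:ℝ) < 150)]
    nlinarith [mul_pos hε (sub_pos.mpr hεM),
      mul_nonneg (mul_nonneg hε.le hM.le) (by linarith : (0:ℝ) ≤ (m:ℝ) - 1)]
  refine ⟨R, ?_, ?_⟩
  · have hmIcc : m ∈ Finset.Icc m₀ (K ε₀ fs + m₀) :=
      Finset.mem_Icc.mpr ⟨by rw [hmdef]; omega, by rw [hmdef]; omega⟩
    have hφΓ : φ m ≤ Γ := Finset.le_sup hmIcc
    have hΓt : Γt ≤ φ m :=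
      Nat.sInf_le ⟨m, Set.mem_Icc.mpr ⟨by rw [hmdef]; omega, by rw [hmdef]; omega⟩, rfl⟩
    have hkIcc : φ m ∈ Finset.Icc Γt Γ := Finset.mem_Icc.mpr ⟨hΓt, hφΓ⟩
    calc R ≤ max (R₂ (E (φ m) * ε ^ 2 / (12 * M ^ 2))) (φ m + 1) := le_max_left _ _
      _ ≤ Sig := Finset.le_sup
            (f := fun k => max (R₂ (E k * ε ^ 2 / (12 * M ^ 2))) (k + 1)) hkIcc
  · intro k hk l hl
    rw [Set.mem_Icc] at hk hl
    have htri : ∀ j, R + 1 ≤ j → j ≤ R + g R → ‖x j - z m'‖ ≤ 149 / 300 * ε :=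
      fun j h1 h2 => hxz j h1 (by exact h2)
    rcases eq_or_lt_of_le hk.1 with hkR | hkR <;> rcases eq_or_lt_of_le hl.1 with hlR | hlR
    · rw [← hkR, ← hlR]
      simp [hε.le]
    · have e1 := htri (R + 1) le_rfl (by omega)
      have e2 := htri l hlR hl.2
      have hsplit : x k - x l = -(x (R + 1) - x R) + ((x (R + 1) - z m') - (x l - z m')) := by
        rw [← hkR]; abel
      calc ‖x k - x l‖
          ≤ ‖x (R + 1) - x R‖ + (‖x (R + 1) - z m'‖ + ‖x l - z m'‖) := by
            rw [hsplit]
            refine le_trans (norm_add_le _ _) ?_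
            rw [norm_neg]
            exact add_le_add_right (norm_sub_le _ _) _
        _ ≤ ε / 150 + (149 / 300 * ε + 149 / 300 * ε) := by
            refine add_le_add hbR (add_le_add e1 e2)
        _ = ε := by ring
    · have e1 := htri (R + 1) le_rfl (by omega)
      have e2 := htri k hkR hk.2
      have hsplit : x k - x l = ((x k - z m') - (x (R + 1) - z m')) + (x (R + 1) - x R) := by
        rw [← hlR]; abel
      calc ‖x k - x l‖
          ≤ (‖x k - z m'‖ + ‖x (R + 1) - z m'‖) + ‖x (R + 1) - x R‖ := by
            rw [hsplit]
            refine le_trans (norm_add_le _ _) ?_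
            exact add_le_add_left (norm_sub_le _ _) _
        _ ≤ (149 / 300 * ε + 149 / 300 * ε) + ε / 150 := by
            refine add_le_add (add_le_add e2 e1) hbR
        _ = ε := by ring
    · have e1 := htri k hkR hk.2
      have e2 := htri l hlR hl.2
      have hsplit : x k - x l = (x k - z m') - (x l - z m') := by abel
      calc ‖x k - x l‖ ≤ ‖x k - z m'‖ + ‖x l - z m'‖ := by
            rw [hsplit]; exact norm_sub_le _ _
        _ ≤ 149 / 300 * ε + 149 / 300 * ε := add_le_add e1 e2
        _ ≤ ε := by linarith
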